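/- For r ∈ (0,1), the closed hyperbolic disc in the strip S with hyperbolic center 0 and hyperbolic radius λ(r) = ln((1+r)/(1-r)) is contained in the Euclidean rectangle [-(4/π)arctan r, (4/π)arctan r] × [-(2/π)λ(r), (2/π)λ(r)]. -/

import Mathlib

open Complex Set

/-- The strip `S = {z : -1 < Re z < 1}`. -/
def stripS : Set ℂ := {z : ℂ | -1 < z.re ∧ z.re < 1}

/-- The unit disc. -/
def discU : Set ℂ := {z : ℂ | ‖z‖ < 1}

/-- Hyperbolic density of the strip. -/
noncomputable def rhoS (z : ℂ) : ℝ := (Real.pi / 2) / Real.cos (Real.pi / 2 * z.re)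

/-- Hyperbolic density of the unit disc. -/
noncomputable def rhoU (z : ℂ) : ℝ := 2 / (1 - ‖z‖ ^ 2)

/-- Hyperbolic length of a curve in the strip. -/
noncomputable def hypLenS (γ : ℝ → ℂ) : ℝ := ∫ t in (0:ℝ)..1, rhoS (γ t) * ‖deriv γ t‖

/-- Hyperbolic length of a curve in the disc. -/
noncomputable def hypLenU (γ : ℝ → ℂ) : ℝ := ∫ t in (0:ℝ)..1, rhoU (γ t) * ‖deriv γ t‖

/-- Hyperbolic distance on the strip: infimum of hyperbolic lengths of C¹ curves. -/
noncomputable def dS (z₁ z₂ : ℂ) : ℝ :=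
  sInf { L : ℝ | ∃ γ : ℝ → ℂ, ContDiffOn ℝ 1 γ (Icc 0 1) ∧ γ 0 = z₁ ∧ γ 1 = z₂ ∧
    (∀ t ∈ Icc (0:ℝ) 1, γ t ∈ stripS) ∧ L = hypLenS γ }

/-- Hyperbolic distance on the unit disc. -/
noncomputable def dU (z₁ z₂ : ℂ) : ℝ :=
  sInf { L : ℝ | ∃ γ : ℝ → ℂ, ContDiffOn ℝ 1 γ (Icc 0 1) ∧ γ 0 = z₁ ∧ γ 1 = z₂ ∧
    (∀ t ∈ Icc (0:ℝ) 1, γ t ∈ discU) ∧ L = hypLenU γ }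

/-- The conformal map of the disc onto the strip, inverse of `z ↦ tan (π z / 4)`. -/
noncomputable def phiUS (z : ℂ) : ℂ :=
  (-(2 * Complex.I) / (Real.pi : ℂ)) * Complex.log ((1 + Complex.I * z) / (1 - Complex.I * z))

/-- Inverse hyperbolic tangent. -/
noncomputable def artanh (r : ℝ) : ℝ := Real.log ((1 + r) / (1 - r)) / 2

/-- A real-valued function is harmonic on a set. -/
def HarmonicOnR (u : ℂ → ℝ) (s : Set ℂ) : Prop :=
  ContDiffOn ℝ 2 u s ∧ ∀ z ∈ s,
    fderiv ℝ (fun w => fderiv ℝ u w 1) z 1 + fderiv ℝ (fun w => fderiv ℝ u w Complex.I) z Complex.I = 0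

/-- A complex-valued function is harmonic on a set. -/
def HarmonicOnC (f : ℂ → ℂ) (s : Set ℂ) : Prop :=
  ContDiffOn ℝ 2 f s ∧ ∀ z ∈ s,
    fderiv ℝ (fun w => fderiv ℝ f w 1) z 1 + fderiv ℝ (fun w => fderiv ℝ f w Complex.I) z Complex.I = 0

/-- Wirtinger derivative ∂f/∂z. -/
noncomputable def wderiv (f : ℂ → ℂ) (z : ℂ) : ℂ :=
  (fderiv ℝ f z 1 - Complex.I * fderiv ℝ f z Complex.I) / 2

/-- Wirtinger derivative ∂f/∂z̄. -/
noncomputable def wderivBar (f : ℂ → ℂ) (z : ℂ) : ℂ :=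
  (fderiv ℝ f z 1 + Complex.I * fderiv ℝ f z Complex.I) / 2

/-- Sense-preserving K-quasiregular C¹ map on a set. -/
def QRegOn (K : ℝ) (f : ℂ → ℂ) (s : Set ℂ) : Prop :=
  ContDiffOn ℝ 1 f s ∧ ∀ z ∈ s,
    ‖wderivBar f z‖ < ‖wderiv f z‖ ∧
    ‖wderiv f z‖ + ‖wderivBar f z‖
      ≤ K * (‖wderiv f z‖ - ‖wderivBar f z‖)

section Aux
open intervalIntegral MeasureTheory

lemma strip_cos_pos {z : ℂ} (hz : z ∈ stripS) : 0 < Real.cos (Real.pi / 2 * z.re) := by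
  apply Real.cos_pos_of_mem_Ioo
  obtain ⟨h1, h2⟩ := hz
  constructor
  · nlinarith [Real.pi_pos]
  · nlinarith [Real.pi_pos]

lemma rhoS_pos {z : ℂ} (hz : z ∈ stripS) : 0 < rhoS z :=
  div_pos (by positivity) (strip_cos_pos hz)

lemma rhoS_ge {z : ℂ} (hz : z ∈ stripS) : Real.pi / 2 ≤ rhoS z := by
  have h1 : Real.cos (Real.pi / 2 * z.re) ≤ 1 := Real.cos_le_one _
  have h2 := strip_cos_pos hz
  rw [rhoS, le_div_iff₀ h2]
  nlinarith [Real.pi_pos]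

lemma rhoS_continuousOn : ContinuousOn rhoS stripS := by
  apply ContinuousOn.div continuousOn_const
  · exact (Real.continuous_cos.comp (continuous_const.mul Complex.continuous_re)).continuousOn
  · exact fun z hz => (strip_cos_pos hz).ne'

noncomputable def Ffun (x : ℝ) : ℝ :=
  Real.log (1 + Real.tan (Real.pi / 4 * x)) - Real.log (1 - Real.tan (Real.pi / 4 * x))

lemma tan_mem {x : ℝ} (hx : x ∈ Ioo (-1:ℝ) 1) :
    Real.tan (Real.pi / 4 * x) ∈ Ioo (-1:ℝ) 1 ∧ 0 < Real.cos (Real.pi / 4 * x) := by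
  obtain ⟨h1, h2⟩ := hx
  have hπ := Real.pi_pos
  have hu1 : -(Real.pi / 4) < Real.pi / 4 * x := by nlinarith
  have hu2 : Real.pi / 4 * x < Real.pi / 4 := by nlinarith
  have hmem : Real.pi / 4 * x ∈ Ioo (-(Real.pi/2)) (Real.pi/2) :=
    ⟨by nlinarith, by nlinarith⟩
  have hmem4 : Real.pi / 4 ∈ Ioo (-(Real.pi/2)) (Real.pi/2) := ⟨by nlinarith, by nlinarith⟩
  have hmem4' : -(Real.pi / 4) ∈ Ioo (-(Real.pi/2)) (Real.pi/2) := ⟨by nlinarith, by nlinarith⟩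
  refine ⟨⟨?_, ?_⟩, Real.cos_pos_of_mem_Ioo hmem⟩
  · have := Real.strictMonoOn_tan hmem4' hmem hu1
    rwa [Real.tan_neg, Real.tan_pi_div_four] at this
  · have := Real.strictMonoOn_tan hmem hmem4 hu2
    rwa [Real.tan_pi_div_four] at this

lemma hasDerivAt_Ffun {x : ℝ} (hx : x ∈ Ioo (-1:ℝ) 1) :
    HasDerivAt Ffun ((Real.pi / 2) / Real.cos (Real.pi / 2 * x)) x := by
  obtain ⟨⟨ht1, ht2⟩, hc⟩ := tan_mem hx
  set u := Real.pi / 4 * x with hu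
  have hcne : Real.cos u ≠ 0 := hc.ne'
  have hinner : HasDerivAt (fun y : ℝ => Real.pi / 4 * y) (Real.pi / 4) x := by
    simpa using (hasDerivAt_id x).const_mul (Real.pi / 4)
  have htan : HasDerivAt (fun y : ℝ => Real.tan (Real.pi / 4 * y))
      (1 / Real.cos u ^ 2 * (Real.pi / 4)) x :=
    (Real.hasDerivAt_tan hcne).comp x hinner
  have hp1 : (0:ℝ) < 1 + Real.tan u := by linarith
  have hp2 : (0:ℝ) < 1 - Real.tan u := by linarith
  have h1 : HasDerivAt (fun y : ℝ => Real.log (1 + Real.tan (Real.pi / 4 * y)))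
      ((1 / Real.cos u ^ 2 * (Real.pi / 4)) / (1 + Real.tan u)) x :=
    ((htan.const_add 1).log hp1.ne')
  have h2 : HasDerivAt (fun y : ℝ => Real.log (1 - Real.tan (Real.pi / 4 * y)))
      ((-(1 / Real.cos u ^ 2 * (Real.pi / 4))) / (1 - Real.tan u)) x :=
    ((htan.const_sub 1).log hp2.ne')
  have h3 := h1.sub h2
  refine h3.congr_deriv ?_
  have hcos2 : Real.cos (Real.pi / 2 * x) = Real.cos u ^ 2 - Real.sin u ^ 2 := by
    rw [show Real.pi / 2 * x = 2 * u by rw [hu]; ring, Real.cos_two_mul']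
  have hs : Real.tan u = Real.sin u / Real.cos u := Real.tan_eq_sin_div_cos u
  have h1' : Real.sin u < Real.cos u := by
    have := ht2; rw [hs, div_lt_one hc] at this; linarith
  have h2' : -Real.cos u < Real.sin u := by
    have := ht1; rw [hs, lt_div_iff₀ hc] at this; linarith
  have hcs : Real.cos u + Real.sin u ≠ 0 := by linarith
  have hcs' : Real.cos u - Real.sin u ≠ 0 := by linarith
  have hne2 : Real.cos u ^ 2 - Real.sin u ^ 2 ≠ 0 := by nlinarith
  rw [hcos2, hs]
  field_simp
  ring

lemma curve_bound (γ : ℝ → ℂ) (hγ : ContDiffOn ℝ 1 γ (Icc 0 1))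
    (hmem : ∀ t ∈ Icc (0:ℝ) 1, γ t ∈ stripS)
    (u g : ℝ → ℝ) (hu : ContinuousOn u (Icc 0 1)) (hg : ContinuousOn g (Icc 0 1))
    (hd : ∀ t ∈ Ioo (0:ℝ) 1, HasDerivAt u (g t) t)
    (hle : ∀ t ∈ Icc (0:ℝ) 1, |g t| ≤ rhoS (γ t) * ‖derivWithin γ (Icc 0 1) t‖) :
    |u 1 - u 0| ≤ hypLenS γ := by
  have hDcont : ContinuousOn (derivWithin γ (Icc 0 1)) (Icc 0 1) :=
    hγ.continuousOn_derivWithin (uniqueDiffOn_Icc one_pos) le_rfl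
  have hrho : ContinuousOn (fun t => rhoS (γ t)) (Icc 0 1) :=
    rhoS_continuousOn.comp hγ.continuousOn hmem
  have hH : ContinuousOn (fun t => rhoS (γ t) * ‖derivWithin γ (Icc 0 1) t‖) (Icc 0 1) :=
    hrho.mul hDcont.norm
  have hgint : IntervalIntegrable g volume 0 1 := hg.intervalIntegrable_of_Icc zero_le_one
  have hftc : ∫ t in (0:ℝ)..1, g t = u 1 - u 0 :=
    integral_eq_sub_of_hasDeriv_right_of_le zero_le_one hu
      (fun t ht => (hd t ht).hasDerivWithinAt) hgint
  have h1 : |u 1 - u 0| ≤ ∫ t in (0:ℝ)..1, |g t| := by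
    rw [← hftc]; exact abs_integral_le_integral_abs zero_le_one
  have h2 : (∫ t in (0:ℝ)..1, |g t|) ≤ ∫ t in (0:ℝ)..1,
      rhoS (γ t) * ‖derivWithin γ (Icc 0 1) t‖ :=
    integral_mono_on zero_le_one (hg.abs.intervalIntegrable_of_Icc zero_le_one)
      (hH.intervalIntegrable_of_Icc zero_le_one) hle
  have h3 : hypLenS γ = ∫ t in (0:ℝ)..1, rhoS (γ t) * ‖derivWithin γ (Icc 0 1) t‖ := by
    unfold hypLenS
    apply intervalIntegral.integral_congr_ae
    have hone : ∀ᵐ t : ℝ, t ≠ 1 := by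
      rw [ae_iff]
      simp only [ne_eq, not_not, Set.setOf_eq_eq_singleton]
      exact Real.volume_singleton
    filter_upwards [hone] with t ht htmem
    rw [uIoc_of_le zero_le_one] at htmem
    have htoo : t ∈ Ioo (0:ℝ) 1 := ⟨htmem.1, lt_of_le_of_ne htmem.2 ht⟩
    rw [← derivWithin_of_mem_nhds (Icc_mem_nhds htoo.1 htoo.2)]
  rw [h3]
  linarith

lemma dS_aux (z : ℂ) (hz : z ∈ stripS) (γ : ℝ → ℂ)
    (hγ : ContDiffOn ℝ 1 γ (Icc 0 1)) (h0 : γ 0 = z) (h1 : γ 1 = 0)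
    (hmem : ∀ t ∈ Icc (0:ℝ) 1, γ t ∈ stripS) :
    Real.pi / 2 * |z.im| ≤ hypLenS γ ∧ |Ffun z.re| ≤ hypLenS γ := by
  have hdiff : ∀ t ∈ Ioo (0:ℝ) 1, HasDerivAt γ (derivWithin γ (Icc 0 1) t) t := by
    intro t ht
    exact (((hγ.differentiableOn one_ne_zero) t (Ioo_subset_Icc_self ht)).hasDerivWithinAt).hasDerivAt
      (Icc_mem_nhds ht.1 ht.2)
  have hDcont : ContinuousOn (derivWithin γ (Icc 0 1)) (Icc 0 1) :=
    hγ.continuousOn_derivWithin (uniqueDiffOn_Icc one_pos) le_rfl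
  constructor
  · have key := curve_bound γ hγ hmem
      (fun t => Real.pi / 2 * (γ t).im)
      (fun t => Real.pi / 2 * (derivWithin γ (Icc 0 1) t).im)
      (continuousOn_const.mul (Complex.continuous_im.comp_continuousOn hγ.continuousOn))
      (continuousOn_const.mul (Complex.continuous_im.comp_continuousOn hDcont))
      (fun t ht => ((Complex.imCLM.hasFDerivAt.comp_hasDerivAt t (hdiff t ht)).const_mul
        (Real.pi / 2)))
      ?_
    · simp only [h0, h1] at key
      rw [show Real.pi / 2 * (0:ℂ).im - Real.pi / 2 * z.im = -(Real.pi / 2 * z.im) by simp,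
        abs_neg, abs_mul, abs_of_pos (by positivity : (0:ℝ) < Real.pi / 2)] at key
      exact key
    · intro t ht
      have h1' : |(derivWithin γ (Icc 0 1) t).im| ≤ ‖derivWithin γ (Icc 0 1) t‖ := by
        exact Complex.abs_im_le_norm _
      have h2' := rhoS_ge (hmem t ht)
      have h3' : (0:ℝ) ≤ ‖derivWithin γ (Icc 0 1) t‖ := norm_nonneg _
      rw [abs_mul, abs_of_pos (by positivity : (0:ℝ) < Real.pi / 2)]
      calc Real.pi / 2 * |(derivWithin γ (Icc 0 1) t).im|
          ≤ Real.pi / 2 * ‖derivWithin γ (Icc 0 1) t‖ := by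
            apply mul_le_mul_of_nonneg_left h1' (by positivity)
        _ ≤ rhoS (γ t) * ‖derivWithin γ (Icc 0 1) t‖ :=
            mul_le_mul_of_nonneg_right h2' h3'
  · have hFcont : ContinuousOn Ffun (Ioo (-1:ℝ) 1) :=
      fun x hx => ((hasDerivAt_Ffun hx).continuousAt).continuousWithinAt
    have hmaps : ∀ t ∈ Icc (0:ℝ) 1, (γ t).re ∈ Ioo (-1:ℝ) 1 :=
      fun t ht => ⟨(hmem t ht).1, (hmem t ht).2⟩
    have key := curve_bound γ hγ hmem
      (fun t => Ffun ((γ t).re))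
      (fun t => rhoS (γ t) * (derivWithin γ (Icc 0 1) t).re)
      (hFcont.comp (Complex.continuous_re.comp_continuousOn hγ.continuousOn) hmaps)
      ((rhoS_continuousOn.comp hγ.continuousOn hmem).mul
        (Complex.continuous_re.comp_continuousOn hDcont))
      ?_ ?_
    · simp only [h0, h1] at key
      have hF0 : Ffun (0:ℂ).re = 0 := by simp [Ffun]
      rw [hF0, zero_sub, abs_neg] at key
      exact key
    · intro t ht
      have hre : HasDerivAt (fun t => (γ t).re) ((derivWithin γ (Icc 0 1) t).re) t :=
        Complex.reCLM.hasFDerivAt.comp_hasDerivAt t (hdiff t ht)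
      have hF := hasDerivAt_Ffun (hmaps t (Ioo_subset_Icc_self ht))
      have := hF.comp t hre
      exact this
    · intro t ht
      have h1' : |(derivWithin γ (Icc 0 1) t).re| ≤ ‖derivWithin γ (Icc 0 1) t‖ := by
        exact Complex.abs_re_le_norm _
      rw [abs_mul, abs_of_pos (rhoS_pos (hmem t ht))]
      exact mul_le_mul_of_nonneg_left h1' (le_of_lt (rhoS_pos (hmem t ht)))

lemma dS_lower (z : ℂ) (hz : z ∈ stripS) :
    Real.pi / 2 * |z.im| ≤ dS z 0 ∧ |Ffun z.re| ≤ dS z 0 := by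
  have hne : ({ L : ℝ | ∃ γ : ℝ → ℂ, ContDiffOn ℝ 1 γ (Icc 0 1) ∧ γ 0 = z ∧ γ 1 = 0 ∧
      (∀ t ∈ Icc (0:ℝ) 1, γ t ∈ stripS) ∧ L = hypLenS γ }).Nonempty := by
    refine ⟨hypLenS (fun t : ℝ => (1 - t) • z), fun t : ℝ => (1 - t) • z, ?_, by simp, by simp,
      ?_, rfl⟩
    · exact ((contDiff_const.sub contDiff_id).smul contDiff_const).contDiffOn
    · intro t ht
      have hre : ((1 - t) • z).re = (1 - t) * z.re := by
        simp [Complex.smul_re]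
      obtain ⟨h1, h2⟩ := hz
      obtain ⟨ht0, ht1⟩ := ht
      constructor <;> rw [hre] <;> nlinarith
  constructor
  · apply le_csInf hne
    rintro L ⟨γ, hγ, h0, h1, hmem, rfl⟩
    exact (dS_aux z hz γ hγ h0 h1 hmem).1
  · apply le_csInf hne
    rintro L ⟨γ, hγ, h0, h1, hmem, rfl⟩
    exact (dS_aux z hz γ hγ h0 h1 hmem).2

end Aux

/-- the closed hyperbolic disc of radius `λ(r) = ln((1+r)/(1-r))`
centered at `0` in the strip is contained in the rectangle
`[-(4/π)arctan r, (4/π)arctan r] × [-(2/π)λ(r), (2/π)λ(r)]`. -/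
theorem hyperbolic_disc_subset_rectangle (r : ℝ) (hr : r ∈ Set.Ioo (0:ℝ) 1) :
    ∀ z ∈ stripS, dS z 0 ≤ Real.log ((1 + r) / (1 - r)) →
      |z.re| ≤ (4 / Real.pi) * Real.arctan r ∧
      |z.im| ≤ (2 / Real.pi) * Real.log ((1 + r) / (1 - r)) := by
  obtain ⟨hr0, hr1⟩ := hr
  intro z hz hd
  have hπ := Real.pi_pos
  obtain ⟨him, hreb⟩ := dS_lower z hz
  constructor
  · -- real part
    set x := |z.re| with hxdef
    have hx0 : 0 ≤ x := abs_nonneg _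
    have hx1 : x < 1 := abs_lt.mpr ⟨hz.1, hz.2⟩
    -- Ffun x ≤ L0
    have hFodd : Ffun (-z.re) = -Ffun z.re := by
      simp only [Ffun, mul_neg, Real.tan_neg, sub_neg_eq_add]
      ring
    have hFnonneg : ∀ y : ℝ, 0 ≤ y → y < 1 → 0 ≤ Ffun y := by
      intro y hy0 hy1
      have hmem : y ∈ Ioo (-1:ℝ) 1 := ⟨by linarith, hy1⟩
      obtain ⟨⟨ht1, ht2⟩, _⟩ := tan_mem hmem
      have htnn : 0 ≤ Real.tan (Real.pi / 4 * y) :=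
        Real.tan_nonneg_of_nonneg_of_le_pi_div_two (by positivity) (by nlinarith)
      have := Real.log_le_log (by linarith) (by linarith : 1 - Real.tan (Real.pi/4*y) ≤ 1 + Real.tan (Real.pi/4*y))
      simpa [Ffun, sub_nonneg] using this
    have hFx : Ffun x ≤ Real.log ((1 + r) / (1 - r)) := by
      rcases abs_cases z.re with ⟨he, _⟩ | ⟨he, hneg⟩
      · rw [hxdef, he]
        calc Ffun z.re ≤ |Ffun z.re| := le_abs_self _
          _ ≤ _ := le_trans hreb hd
      · rw [hxdef, he, hFodd]
        calc -Ffun z.re ≤ |Ffun z.re| := neg_le_abs _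
          _ ≤ _ := le_trans hreb hd
    -- tan (π/4 x) ≤ r
    have hxm : x ∈ Ioo (-1:ℝ) 1 := ⟨by linarith, hx1⟩
    obtain ⟨⟨ht1, ht2⟩, hcx⟩ := tan_mem hxm
    set t := Real.tan (Real.pi / 4 * x) with htdef
    have hlog : Real.log ((1 + r) / (1 - r)) = Real.log (1 + r) - Real.log (1 - r) :=
      Real.log_div (by linarith) (by linarith)
    have htr : t ≤ r := by
      by_contra hlt
      push_neg at hlt
      have e1 : Real.log (1 + r) < Real.log (1 + t) := Real.log_lt_log (by linarith) (by linarith)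
      have e2 : Real.log (1 - t) < Real.log (1 - r) := Real.log_lt_log (by linarith) (by linarith)
      have : Real.log ((1 + r) / (1 - r)) < Ffun x := by
        rw [hlog, Ffun, ← htdef]; linarith
      linarith
    -- π/4 x ≤ arctan r
    have harc : Real.pi / 4 * x ≤ Real.arctan r := by
      by_contra hlt
      push_neg at hlt
      have hmem1 : Real.arctan r ∈ Ioo (-(Real.pi/2)) (Real.pi/2) :=
        ⟨Real.neg_pi_div_two_lt_arctan r, Real.arctan_lt_pi_div_two r⟩
      have hmem2 : Real.pi / 4 * x ∈ Ioo (-(Real.pi/2)) (Real.pi/2) :=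
        ⟨by nlinarith, by nlinarith⟩
      have := Real.strictMonoOn_tan hmem1 hmem2 hlt
      rw [Real.tan_arctan] at this
      exact absurd htr (not_le.mpr this)
    calc x = 4 / Real.pi * (Real.pi / 4 * x) := by field_simp
      _ ≤ 4 / Real.pi * Real.arctan r := by
          apply mul_le_mul_of_nonneg_left harc (by positivity)
  · have h' : Real.pi / 2 * |z.im| ≤ Real.log ((1 + r) / (1 - r)) := le_trans him hd
    calc |z.im| = 2 / Real.pi * (Real.pi / 2 * |z.im|) := by field_simp
      _ ≤ 2 / Real.pi * Real.log ((1 + r) / (1 - r)) := by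
          apply mul_le_mul_of_nonneg_left h' (by positivity)
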